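/- Let a > 0, σ > 0 and M > 0. Then for all D, S ∈ Sym3 with |D| < M, the following equivalence holds: S = σ (M^a − |D|^a)^{−1/a} D if and only if D = M (σ^a + |S|^a)^{−1/a} S. -/

import Mathlib

noncomputable section

/-- Frobenius inner product on 3×3 real matrices: `A·B = Σ_{i,j} A_{ij} B_{ij}`. -/
def mdot (A B : Matrix (Fin 3) (Fin 3) ℝ) : ℝ := ∑ i, ∑ j, A i j * B i j

/-- Frobenius norm `|A| = (A·A)^{1/2}`. -/
def mnorm (A : Matrix (Fin 3) (Fin 3) ℝ) : ℝ := Real.sqrt (mdot A A)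

lemma mnorm_nonneg (A : Matrix (Fin 3) (Fin 3) ℝ) : 0 ≤ mnorm A := Real.sqrt_nonneg _

lemma mnorm_smul (c : ℝ) (hc : 0 ≤ c) (A : Matrix (Fin 3) (Fin 3) ℝ) :
    mnorm (c • A) = c * mnorm A := by
  unfold mnorm mdot
  have h : ∑ i, ∑ j, (c • A) i j * (c • A) i j = c ^ 2 * ∑ i, ∑ j, A i j * A i j := by
    rw [Finset.mul_sum]
    refine Finset.sum_congr rfl fun i _ => ?_
    rw [Finset.mul_sum]
    refine Finset.sum_congr rfl fun j _ => ?_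
    simp [Matrix.smul_apply]; ring
  rw [h, Real.sqrt_mul (sq_nonneg c), Real.sqrt_sq hc]

lemma gen_aux (a x y t : ℝ) (ha : 0 < a) (hx : 0 < x) (hy : 0 < y) (ht : 0 < t) :
    x * (y ^ a * x ^ a * t⁻¹) ^ (-1/a) * (y * t ^ (-1/a)) = 1 := by
  have hne : a ≠ 0 := ha.ne'
  have h1 : (y ^ a * x ^ a * t⁻¹) ^ (-1/a)
      = (y ^ a) ^ (-1/a) * (x ^ a) ^ (-1/a) * (t⁻¹) ^ (-1/a) := by
    rw [Real.mul_rpow (by positivity) (by positivity),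
        Real.mul_rpow (by positivity) (by positivity)]
  have hexp : a * (-1/a) = -1 := by field_simp
  have h2 : (y ^ a) ^ (-1/a) = y⁻¹ := by
    rw [← Real.rpow_mul hy.le, hexp, Real.rpow_neg_one]
  have h3 : (x ^ a) ^ (-1/a) = x⁻¹ := by
    rw [← Real.rpow_mul hx.le, hexp, Real.rpow_neg_one]
  have h4 : (t⁻¹) ^ (-1/a) = (t ^ (-1/a))⁻¹ := Real.inv_rpow ht.le _
  have h5 : t ^ (-1/a) ≠ 0 := (Real.rpow_pos_of_pos ht _).ne'
  rw [h1, h2, h3, h4]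
  field_simp

lemma rpow_coeff (σ t : ℝ) (a : ℝ) (ha : 0 < a) (hσ : 0 < σ) (ht : 0 < t) :
    (σ * t ^ (-1/a)) ^ a = σ ^ a * t⁻¹ := by
  rw [Real.mul_rpow hσ.le (Real.rpow_pos_of_pos ht _).le, ← Real.rpow_mul ht.le,
    div_mul_cancel₀ _ ha.ne', Real.rpow_neg_one]

/-- Invertibility of the limiting-strain-type relation (activation `m = 0`): for `|D| < M`,
`S = σ(M^a − |D|^a)^{−1/a} D  ↔  D = M(σ^a + |S|^a)^{−1/a} S`. -/
theorem constitutive_invertible (a σ M : ℝ) (ha : 0 < a) (hσ : 0 < σ) (hM : 0 < M)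
    (D S : Matrix (Fin 3) (Fin 3) ℝ) (hD : D.IsSymm) (hS : S.IsSymm)
    (hDM : mnorm D < M) :
    S = (σ * (M ^ a - mnorm D ^ a) ^ (-1/a)) • D ↔
      D = (M * (σ ^ a + mnorm S ^ a) ^ (-1/a)) • S := by
  constructor
  · intro h
    set d := mnorm D with hd
    have hd0 : 0 ≤ d := mnorm_nonneg D
    have ht : 0 < M ^ a - d ^ a := sub_pos.2 (Real.rpow_lt_rpow hd0 hDM ha)
    have hc : 0 < σ * (M ^ a - d ^ a) ^ (-1/a) :=
      mul_pos hσ (Real.rpow_pos_of_pos ht _)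
    have hs : mnorm S = σ * (M ^ a - d ^ a) ^ (-1/a) * d := by
      rw [h, mnorm_smul _ hc.le]
    have key : σ ^ a + (σ * (M ^ a - d ^ a) ^ (-1/a) * d) ^ a
        = σ ^ a * M ^ a * (M ^ a - d ^ a)⁻¹ := by
      rw [Real.mul_rpow hc.le hd0, rpow_coeff σ _ a ha hσ ht]
      field_simp
      ring
    rw [hs, h, smul_smul, key, gen_aux a M σ (M ^ a - d ^ a) ha hM hσ ht, one_smul]
  · intro h
    set s := mnorm S with hs
    have hs0 : 0 ≤ s := mnorm_nonneg S
    have hu : 0 < σ ^ a + s ^ a :=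
      add_pos_of_pos_of_nonneg (Real.rpow_pos_of_pos hσ _) (Real.rpow_nonneg hs0 _)
    have hc : 0 < M * (σ ^ a + s ^ a) ^ (-1/a) :=
      mul_pos hM (Real.rpow_pos_of_pos hu _)
    have hdval : mnorm D = M * (σ ^ a + s ^ a) ^ (-1/a) * s := by
      rw [h, mnorm_smul _ hc.le]
    have key : M ^ a - (M * (σ ^ a + s ^ a) ^ (-1/a) * s) ^ a
        = M ^ a * σ ^ a * (σ ^ a + s ^ a)⁻¹ := by
      rw [Real.mul_rpow hc.le hs0, rpow_coeff M _ a ha hM hu]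
      field_simp
      ring
    rw [hdval, h, smul_smul, key, gen_aux a σ M (σ ^ a + s ^ a) ha hσ hM hu, one_smul]
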